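/- arXiv:math/0612656 — 2 statements merged into one kernel-verified Lean document; each statement's English description precedes it below -/
import Mathlib

section
/- Let k be an algebraically closed field of characteristic zero, n > 1, p a positive integer, and let P'(z) = w_0 z^m + w_1 z^{m-1} + ... + w_{m-1} z + w_m with m > 1, where each w_i ∈ K has Newton diagram 𝓔(w_i) ⊆ ℝ_{≥0}^n ∩ (1/p)ℤ^n and w_m ≠ 0. Assume that for every i ∈ {0,1,...,m-2,m} every exponent in 𝓔(w_i) has positive first coordinate (i.e. w_i vanishes at x_1 = 0), while w_{m-1} has an exponent with first coordinate zero (i.e. w_{m-1} does not vanish at x_1 = 0). Then P' has exactly one root f ∈ K all of whose exponents have positive first coordinate (positive x_1-order), and there exists a finite composition Φ of order-preserving monomial blowing-ups of ℚ^n such that the image Φ_*(f) of this root under the induced automorphism of K has Newton diagram contained in ℝ_{≥0}^n ∩ (1/p)ℤ^n, i.e. Φ_*(f) ∈ k[[x_1^{1/p},...,x_n^{1/p}]]. -/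
noncomputable section

instance (n : ℕ) : WellFoundedLT (Fin n) := inferInstance

noncomputable instance (n : ℕ) : IsOrderedAddMonoid (Lex (Fin n → ℚ)) :=
  inferInstance

/-- `K`: the field of Hahn series over `k` with value group `ℚ^n` ordered
lexicographically (formal sums `Σ f_v x^v`, `v ∈ ℚ^n`, with well-ordered support). -/
abbrev K (k : Type*) [Field k] (n : ℕ) : Type _ :=
  HahnSeries (Lex (Fin n → ℚ)) k

/-- The order-preserving monomial blowing-up `φ_{ij}` of `ℚ^n` (intended for `i < j`):
the `j`-th coordinate becomes `a i + a j`, the other coordinates are unchanged. -/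
def blowUp (n : ℕ) (i j : Fin n) : (Fin n → ℚ) → (Fin n → ℚ) :=
  fun a l => if l = j then a i + a j else a l

/-- The order-preserving monomial blowing-down `φ_{ij}⁻¹` of `ℚ^n` (intended for `i < j`). -/
def blowDown (n : ℕ) (i j : Fin n) : (Fin n → ℚ) → (Fin n → ℚ) :=
  fun a l => if l = j then a l - a i else a l

/-- `Φ` is a finite composition of order-preserving monomial blowing-ups `φ_{ij}`, `i < j`. -/
def IsBlowUpComp (n : ℕ) (Φ : (Fin n → ℚ) → (Fin n → ℚ)) : Prop :=
  ∃ L : List ((Fin n → ℚ) → (Fin n → ℚ)),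
    (∀ g ∈ L, ∃ i j : Fin n, i < j ∧ g = blowUp n i j) ∧ Φ = L.foldr (· ∘ ·) id

/-- `Φ ∈ 𝒮`: `Φ` is a finite composition of order-preserving monomial
blowing-downs `φ_{ij}⁻¹`, `i < j`. -/
def IsBlowDownComp (n : ℕ) (Φ : (Fin n → ℚ) → (Fin n → ℚ)) : Prop :=
  ∃ L : List ((Fin n → ℚ) → (Fin n → ℚ)),
    (∀ g ∈ L, ∃ i j : Fin n, i < j ∧ g = blowDown n i j) ∧ Φ = L.foldr (· ∘ ·) id

section BU
variable {n : ℕ}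

lemma List.foldr_comp_apply {α : Type*} (L : List (α → α)) (c : α → α) :
    L.foldr (· ∘ ·) c = (L.foldr (· ∘ ·) id) ∘ c := by
  induction L with
  | nil => rfl
  | cons g L ih => simp [List.foldr_cons, ih, Function.comp_assoc]

lemma IsBlowUpComp.id : IsBlowUpComp n id := ⟨[], by simp, rfl⟩

lemma IsBlowUpComp.comp {Φ Ψ : (Fin n → ℚ) → (Fin n → ℚ)}
    (hΦ : IsBlowUpComp n Φ) (hΨ : IsBlowUpComp n Ψ) : IsBlowUpComp n (Φ ∘ Ψ) := by
  obtain ⟨L1, h1, rfl⟩ := hΦ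
  obtain ⟨L2, h2, rfl⟩ := hΨ
  refine ⟨L1 ++ L2, ?_, ?_⟩
  · intro g hg
    rcases List.mem_append.1 hg with h | h
    · exact h1 g h
    · exact h2 g h
  · rw [List.foldr_append]
    exact (List.foldr_comp_apply _ _).symm

lemma IsBlowUpComp.iterate {i j : Fin n} (hij : i < j) (N : ℕ) :
    IsBlowUpComp n ((blowUp n i j)^[N]) := by
  induction N with
  | zero => exact IsBlowUpComp.id
  | succ N ih =>
    rw [Function.iterate_succ']
    exact IsBlowUpComp.comp ⟨[blowUp n i j], by simp; exact ⟨i, j, hij, rfl⟩, by simp⟩ ih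

lemma blowUp_iterate (i j : Fin n) (hij : i ≠ j) (N : ℕ) (a : Fin n → ℚ) :
    (blowUp n i j)^[N] a = fun l => if l = j then a j + (N : ℚ) * a i else a l := by
  induction N with
  | zero =>
    funext l
    simp only [Function.iterate_zero, id_eq, Nat.cast_zero, zero_mul, add_zero]
    by_cases hl : l = j <;> simp [hl]
  | succ N ih =>
    rw [Function.iterate_succ_apply', ih]
    funext l
    by_cases hl : l = j
    · subst hl
      simp only [blowUp, if_pos rfl, if_neg hij, if_neg hij.symm]
      push_cast; ring
    · simp [blowUp, hl]
lemma blowUp_iterate_apply (i j : Fin n) (hij : i ≠ j) (N : ℕ) (a : Fin n → ℚ) (l : Fin n) :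
    (blowUp n i j)^[N] a l = if l = j then a j + (N : ℚ) * a i else a l := by
  rw [blowUp_iterate i j hij N]
end BU

/-- The composed blow-up map: `(Φ a) l = ∑_{i ≤ l} N^(l-i) * a i`. -/
def phiChain (n N : ℕ) : (Fin n → ℚ) → (Fin n → ℚ) :=
  fun a l => ∑ i : Fin n, if (i : ℕ) ≤ (l : ℕ) then (N : ℚ) ^ ((l : ℕ) - (i : ℕ)) * a i else 0

section Phi
variable {n N : ℕ}

lemma phiChain_add (a b : Fin n → ℚ) :
    phiChain n N (a + b) = phiChain n N a + phiChain n N b := by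
  funext l
  simp only [phiChain, Pi.add_apply, ← Finset.sum_add_distrib]
  refine Finset.sum_congr rfl fun i _ => ?_
  by_cases h : (i : ℕ) ≤ (l : ℕ) <;> simp [h, mul_add]

lemma phiChain_zero : phiChain n N (0 : Fin n → ℚ) = 0 := by
  funext l
  apply Finset.sum_eq_zero
  intro i _
  by_cases h : (i : ℕ) ≤ (l : ℕ) <;> simp [h]

lemma phiChain_apply_of_zero (a : Fin n → ℚ) {l : Fin n} (hl : (l : ℕ) = 0) :
    phiChain n N a l = a l := by
  rw [phiChain]
  rw [Finset.sum_eq_single l]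
  · simp
  · intro i _ hne
    rw [if_neg]
    rw [hl]
    intro h
    exact hne (Fin.ext (by omega))
  · intro h
    exact absurd (Finset.mem_univ l) h

lemma phiChain_succ (a : Fin n → ℚ) {l l' : Fin n} (hl : (l' : ℕ) = (l : ℕ) + 1) :
    phiChain n N a l' = a l' + (N : ℚ) * phiChain n N a l := by
  have : ∀ i : Fin n,
      (if (i : ℕ) ≤ (l' : ℕ) then (N : ℚ) ^ ((l' : ℕ) - (i : ℕ)) * a i else 0)
      = ((N : ℚ) * if (i : ℕ) ≤ (l : ℕ) then (N : ℚ) ^ ((l : ℕ) - (i : ℕ)) * a i else 0)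
        + (if i = l' then a i else 0) := by
    intro i
    by_cases h1 : (i : ℕ) ≤ (l : ℕ)
    · have h2 : (i : ℕ) ≤ (l' : ℕ) := by omega
      have h3 : i ≠ l' := by intro h; subst h; omega
      rw [if_pos h1, if_pos h2, if_neg h3, add_zero]
      have h4 : (l' : ℕ) - (i : ℕ) = ((l : ℕ) - (i : ℕ)) + 1 := by omega
      rw [h4, pow_succ]
      ring
    · by_cases h5 : i = l'
      · have h2 : (i : ℕ) ≤ (l' : ℕ) := by simp [h5]
        rw [if_pos h2, if_neg h1, if_pos h5, h5, Nat.sub_self, pow_zero, one_mul, mul_zero,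
          zero_add]
      · have h6 : ¬ (i : ℕ) ≤ (l' : ℕ) := by
          intro h
          have : (i : ℕ) ≠ (l' : ℕ) := fun hh => h5 (Fin.ext hh)
          omega
        rw [if_neg h6, if_neg h1, if_neg h5, mul_zero, zero_add]
  rw [phiChain, Finset.sum_congr rfl fun i _ => this i, Finset.sum_add_distrib,
    ← Finset.mul_sum, Finset.sum_ite_eq' Finset.univ l' a]
  simp only [Finset.mem_univ, if_pos]
  rw [phiChain]
  ring

end Phi

section Phi2
variable {n N : ℕ}

/-- Partial chain: apply the chain only up to coordinate `j`. -/
def partialPhi (n N j : ℕ) : (Fin n → ℚ) → (Fin n → ℚ) :=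
  fun a l => if (l : ℕ) ≤ j then phiChain n N a l else a l

lemma partialPhi_isBlowUpComp (j : ℕ) : IsBlowUpComp n (partialPhi n N j) := by
  induction j with
  | zero =>
    have : partialPhi n N 0 = id := by
      funext a l
      rw [partialPhi]
      by_cases hl : (l : ℕ) ≤ 0
      · rw [if_pos hl, phiChain_apply_of_zero a (Nat.le_zero.1 hl)]
        rfl
      · rw [if_neg hl]
        rfl
    rw [this]
    exact IsBlowUpComp.id
  | succ j ih =>
    by_cases hj : j + 1 < n
    · have hjn : j < n := by omega
      have key : partialPhi n N (j + 1)
          = (blowUp n ⟨j, hjn⟩ ⟨j + 1, hj⟩)^[N] ∘ partialPhi n N j := by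
        funext a l
        rw [Function.comp_apply, blowUp_iterate_apply _ _ (by simp) N]
        by_cases hl : l = ⟨j + 1, hj⟩
        · subst hl
          have e1 : partialPhi n N j a ⟨j + 1, hj⟩ = a ⟨j + 1, hj⟩ := by
            rw [partialPhi, if_neg (by simp)]
          have e2 : partialPhi n N j a ⟨j, hjn⟩ = phiChain n N a ⟨j, hjn⟩ := by
            rw [partialPhi, if_pos (by simp)]
          have e3 : partialPhi n N (j + 1) a ⟨j + 1, hj⟩ = phiChain n N a ⟨j + 1, hj⟩ := by
            rw [partialPhi, if_pos (by simp)]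
          rw [if_pos rfl, e1, e2, e3, phiChain_succ a (l := ⟨j, hjn⟩) (by simp)]
        · rw [if_neg hl, partialPhi, partialPhi]
          have hne : (l : ℕ) ≠ j + 1 := fun h => hl (Fin.ext h)
          by_cases h2 : (l : ℕ) ≤ j
          · rw [if_pos h2, if_pos (by omega)]
          · rw [if_neg h2, if_neg (by omega)]
      rw [key]
      exact IsBlowUpComp.comp (IsBlowUpComp.iterate (by simp) N) ih
    · have : partialPhi n N (j + 1) = partialPhi n N j := by
        funext a l
        have hl := l.isLt
        rw [partialPhi, partialPhi, if_pos (by omega), if_pos (by omega)]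
      rw [this]
      exact ih

lemma phiChain_isBlowUpComp : IsBlowUpComp n (phiChain n N) := by
  have : phiChain n N = partialPhi n N (n - 1) := by
    funext a l
    have hl := l.isLt
    rw [partialPhi, if_pos (by omega)]
  rw [this]
  exact partialPhi_isBlowUpComp _

/-- Positivity of the chain on suitable vectors. -/
lemma phiChain_nonneg (a : Fin n → ℚ) (q : Fin n) (δ B : ℚ)
    (hδ : 0 < δ) (hB : 0 ≤ B) (hN : B / δ + 2 ≤ (N : ℚ))
    (h1 : δ ≤ a q) (h2 : ∀ l, l < q → a l = 0) (h3 : ∀ l, -B ≤ a l) :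
    ∀ l, 0 ≤ phiChain n N a l := by
  set β : ℚ := B / δ with hβ
  have hβ0 : 0 ≤ β := div_nonneg hB hδ.le
  have hβ1 : 0 < β + 1 := by linarith
  -- value at any l with l < q is 0
  have hzero : ∀ l : Fin n, l < q → phiChain n N a l = 0 := by
    intro l hlq
    rw [phiChain]
    apply Finset.sum_eq_zero
    intro i _
    by_cases h : (i : ℕ) ≤ (l : ℕ)
    · rw [if_pos h, h2 i (Fin.lt_def.2 (by have := Fin.lt_def.1 hlq; omega)), mul_zero]
    · rw [if_neg h]
  -- main induction
  have main : ∀ t : ℕ, ∀ l : Fin n, (l : ℕ) = (q : ℕ) + t →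
      δ * ((N : ℚ) ^ t + β) / (β + 1) ≤ phiChain n N a l := by
    intro t
    induction t with
    | zero =>
      intro l hl
      have hlq : l = q := Fin.ext (by omega)
      subst hlq
      have : phiChain n N a l = a l := by
        rw [phiChain, Finset.sum_eq_single l]
        · simp
        · intro i _ hne
          by_cases h : (i : ℕ) ≤ (l : ℕ)
          · rw [if_pos h, h2 i (by
              have : (i : ℕ) ≠ (l : ℕ) := fun hh => hne (Fin.ext hh)
              exact Fin.lt_def.2 (by omega)), mul_zero]
          · rw [if_neg h]
        · intro h
          exact absurd (Finset.mem_univ l) h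
      rw [this, pow_zero]
      have e : δ * (1 + β) / (β + 1) = δ := by
        rw [add_comm 1 β, mul_div_assoc, div_self (ne_of_gt hβ1), mul_one]
      rw [e]
      exact h1
    | succ t iht =>
      intro l hl
      have hq : (q : ℕ) + t < n := by omega
      set l0 : Fin n := ⟨(q : ℕ) + t, hq⟩ with hl0
      have hrec := phiChain_succ (N := N) a (l := l0) (l' := l) (by simp [hl0, hl]; omega)
      have hprev := iht l0 (by simp [hl0])
      have hNpos : (0 : ℚ) < (N : ℚ) := by linarith
      have step : δ * ((N : ℚ) ^ (t + 1) + β) / (β + 1) ≤ a l + (N : ℚ) * phiChain n N a l0 := by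
        have hNl : (N : ℚ) * (δ * ((N : ℚ) ^ t + β) / (β + 1)) ≤ (N : ℚ) * phiChain n N a l0 :=
          mul_le_mul_of_nonneg_left hprev hNpos.le
        have hal : -B ≤ a l := h3 l
        have hBβ : B = β * δ := by rw [hβ]; field_simp
        have hNβ : β + 2 ≤ (N : ℚ) := hN
        have core : δ * ((N:ℚ)^(t+1) + β) + B * (β + 1) ≤ (N:ℚ) * (δ * ((N:ℚ)^t + β)) := by
          have e : (N:ℚ)^(t+1) = (N:ℚ) * (N:ℚ)^t := by rw [pow_succ]; ring
          rw [e, hBβ]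
          nlinarith [mul_nonneg (mul_nonneg hβ0 hδ.le) (by linarith : (0:ℚ) ≤ (N:ℚ) - β - 2),
            pow_pos hNpos t]
        have h7 := (div_le_div_iff_of_pos_right hβ1).2 core
        rw [add_div, mul_div_cancel_right₀ _ (ne_of_gt hβ1)] at h7
        have ea : δ * (((N:ℚ)^(t+1)+β)/(β+1)) = δ * ((N:ℚ)^(t+1)+β)/(β+1) :=
          (mul_div_assoc _ _ _).symm
        have eb : (N:ℚ)*(δ*((N:ℚ)^t+β))/(β+1) = (N:ℚ) * (δ*((N:ℚ)^t+β)/(β+1)) :=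
          mul_div_assoc _ _ _
        have key : δ * ((N : ℚ) ^ (t + 1) + β) / (β + 1) + B
            ≤ (N : ℚ) * (δ * ((N : ℚ) ^ t + β) / (β + 1)) := by linarith [h7, ea, eb]
        linarith
      rw [hrec]
      exact step
  intro l
  rcases lt_or_ge l q with h | h
  · rw [hzero l h]
  · have : δ * ((N : ℚ) ^ ((l : ℕ) - (q : ℕ)) + β) / (β + 1) ≤ phiChain n N a l :=
      main ((l : ℕ) - (q : ℕ)) l (by
        have := Fin.le_def.1 h
        omega)
    have hNpos : (0 : ℚ) ≤ (N : ℚ) := by positivity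
    have : 0 < δ * ((N : ℚ) ^ ((l : ℕ) - (q : ℕ)) + β) / (β + 1) := by
      apply div_pos _ hβ1
      apply mul_pos hδ
      have : 0 < (N : ℚ) ^ ((l : ℕ) - (q : ℕ)) := by
        apply pow_pos
        linarith
      linarith
    linarith

lemma phiChain_int {p : ℕ} (a : Fin n → ℚ) (h : ∀ i, ∃ z : ℤ, a i = (z : ℚ) / (p : ℚ)) :
    ∀ l, ∃ z : ℤ, phiChain n N a l = (z : ℚ) / (p : ℚ) := by
  intro l
  choose z hz using h
  refine ⟨∑ i : Fin n, if (i : ℕ) ≤ (l : ℕ) then (N : ℤ) ^ ((l : ℕ) - (i : ℕ)) * z i else 0, ?_⟩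
  rw [phiChain]
  push_cast
  rw [Finset.sum_div]
  refine Finset.sum_congr rfl fun i _ => ?_
  by_cases hc : (i : ℕ) ≤ (l : ℕ)
  · rw [if_pos hc, if_pos hc, hz i]
    ring
  · rw [if_neg hc, if_neg hc, zero_div]

lemma phiChain_nat {p : ℕ} (a : Fin n → ℚ) (h : ∀ i, ∃ b : ℕ, a i = (b : ℚ) / (p : ℚ)) :
    ∀ l, ∃ b : ℕ, phiChain n N a l = (b : ℚ) / (p : ℚ) := by
  intro l
  choose z hz using h
  refine ⟨∑ i : Fin n, if (i : ℕ) ≤ (l : ℕ) then N ^ ((l : ℕ) - (i : ℕ)) * z i else 0, ?_⟩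
  rw [phiChain]
  push_cast
  rw [Finset.sum_div]
  refine Finset.sum_congr rfl fun i _ => ?_
  by_cases hc : (i : ℕ) ≤ (l : ℕ)
  · rw [if_pos hc, if_pos hc, hz i]
    ring
  · rw [if_neg hc, if_neg hc, zero_div]

lemma rat_nonneg_int_div {p : ℕ} (hp : 0 < p) (x : ℚ) (hx : 0 ≤ x) (z : ℤ)
    (hz : x = (z : ℚ) / (p : ℚ)) : ∃ a : ℕ, x = (a : ℚ) / (p : ℚ) := by
  have hp' : (0 : ℚ) < (p : ℚ) := by exact_mod_cast hp
  have hz0 : 0 ≤ z := by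
    by_contra h
    push_neg at h
    have : (z : ℚ) < 0 := by exact_mod_cast h
    rw [hz] at hx
    nlinarith [div_neg_of_neg_of_pos this hp']
  refine ⟨z.toNat, by rw [hz]; congr 1; exact_mod_cast congrArg (fun t : ℤ => (t : ℚ)) (Int.toNat_of_nonneg hz0).symm⟩

end Phi2

section PolyExpand
variable {S : Type*} [CommRing S]

/-- Remainder in the first-order expansion of `P.eval (x + d)`. -/
def polyRem (P : Polynomial S) (M : ℕ) (x d : S) : S :=
  ∑ t ∈ Finset.range M, P.coeff t *
    ∑ j ∈ Finset.range t, (t.choose (j + 1) : S) * x ^ (t - 1 - j) * d ^ j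

lemma pow_add_expand (x d : S) (t : ℕ) : (x + d) ^ t
    = x ^ t + d * ∑ j ∈ Finset.range t, (t.choose (j + 1) : S) * x ^ (t - 1 - j) * d ^ j := by
  rw [add_comm x d, add_pow, Finset.sum_range_succ']
  simp only [pow_zero, one_mul, Nat.sub_zero, Nat.choose_zero_right, Nat.cast_one, mul_one]
  rw [Finset.mul_sum, add_comm]
  congr 1
  refine Finset.sum_congr rfl fun j hj => ?_
  have he : t - 1 - j = t - (j + 1) := by omega
  rw [he, pow_succ]
  ring

lemma eval_add_expand (P : Polynomial S) {M : ℕ} (hM : P.natDegree < M) (x d : S) :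
    P.eval (x + d) = P.eval x + d * polyRem P M x d := by
  rw [Polynomial.eval_eq_sum_range' hM, Polynomial.eval_eq_sum_range' hM, polyRem,
    Finset.mul_sum, ← Finset.sum_add_distrib]
  refine Finset.sum_congr rfl fun t ht => ?_
  rw [pow_add_expand]
  ring

end PolyExpand

section SuppLemmas
variable {Γ : Type*} [LinearOrder Γ] [AddCommMonoid Γ] [IsOrderedCancelAddMonoid Γ] {R : Type*} [CommRing R]
open HahnSeries

lemma supp_add' {x y : HahnSeries Γ R} {S : Set Γ} (hx : x.support ⊆ S) (hy : y.support ⊆ S) :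
    (x + y).support ⊆ S := fun v hv => by
  rcases HahnSeries.support_add_subset x y hv with h | h
  · exact hx h
  · exact hy h

lemma supp_neg' {x : HahnSeries Γ R} {S : Set Γ} (hx : x.support ⊆ S) :
    (-x).support ⊆ S := by rwa [HahnSeries.support_neg]

lemma supp_sub' {x y : HahnSeries Γ R} {S : Set Γ} (hx : x.support ⊆ S) (hy : y.support ⊆ S) :
    (x - y).support ⊆ S := by
  rw [sub_eq_add_neg]
  exact supp_add' hx (supp_neg' hy)

lemma supp_mul' {x y : HahnSeries Γ R} {S T U : Set Γ} (hx : x.support ⊆ S) (hy : y.support ⊆ T)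
    (hST : ∀ s ∈ S, ∀ t ∈ T, s + t ∈ U) : (x * y).support ⊆ U := fun v hv => by
  have := HahnSeries.support_mul_subset hv
  rw [Set.mem_add] at this
  obtain ⟨s, hs, t, ht, rfl⟩ := this
  exact hST s (hx hs) t (hy ht)

lemma supp_one' {S : Set Γ} (h0 : (0 : Γ) ∈ S) : (1 : HahnSeries Γ R).support ⊆ S := by
  rw [← HahnSeries.single_zero_one]
  intro v hv
  rw [HahnSeries.eq_of_mem_support_single hv]
  exact h0

lemma supp_pow' {x : HahnSeries Γ R} {S : Set Γ} (h0 : (0 : Γ) ∈ S)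
    (hadd : ∀ s ∈ S, ∀ t ∈ S, s + t ∈ S) (hx : x.support ⊆ S) (t : ℕ) :
    (x ^ t).support ⊆ S := by
  induction t with
  | zero => rw [pow_zero]; exact supp_one' h0
  | succ t ih =>
    rw [pow_succ]
    exact supp_mul' ih hx hadd

lemma supp_sum' {α : Type*} {s : Finset α} {f : α → HahnSeries Γ R} {S : Set Γ}
    (h : ∀ a ∈ s, (f a).support ⊆ S) : (∑ a ∈ s, f a).support ⊆ S := by
  classical
  induction s using Finset.induction_on with
  | empty => simp
  | insert _ _ hna ih =>
    rw [Finset.sum_insert hna]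
    exact supp_add' (h _ (Finset.mem_insert_self _ _))
      (ih fun a ha => h a (Finset.mem_insert_of_mem ha))

lemma supp_natCast' {S : Set Γ} (h0 : (0 : Γ) ∈ S) (c : ℕ) :
    ((c : HahnSeries Γ R)).support ⊆ S := by
  have : (c : HahnSeries Γ R) = HahnSeries.C (c : R) := by
    rw [map_natCast HahnSeries.C c]
  rw [this, HahnSeries.C_apply]
  intro v hv
  rw [HahnSeries.eq_of_mem_support_single hv]
  exact h0

end SuppLemmas

set_option maxHeartbeats 2000000 in
/-- **(Lemma `2402062`).**  Let `k` be algebraically closed of characteristic zero, `n > 1`,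
`p > 0`, and let `P'(z) = w₀ z^m + w₁ z^{m-1} + ⋯ + w_{m-1} z + w_m` with `m > 1`, where
each `wᵢ ∈ K` has Newton diagram contained in `ℝ_{≥0}^n ∩ (1/p)ℤ^n` and `w_m ≠ 0`.
(The coefficient of `z^t` is `w_{m-t}`.)  Assume that for `i ∈ {0, …, m-2, m}` (i.e. for
every `z`-exponent `t ≠ 1`) every exponent of `wᵢ` has positive first coordinate, while
`w_{m-1}` (the coefficient of `z`) has an exponent with first coordinate `0`.  Then `P'`
has exactly one root `f ∈ K` all of whose exponents have positive first coordinate, and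
there is a finite composition `Φ` of order-preserving monomial blowing-ups such that
`Φ(𝓔(f)) ⊆ ℝ_{≥0}^n ∩ (1/p)ℤ^n`, i.e. `Φ_*(f) ∈ k[[x₁^{1/p},…,xₙ^{1/p}]]`. -/



theorem unique_root_with_positive_x1_order
    (k : Type*) [Field k] [IsAlgClosed k] [CharZero k]
    (n : ℕ) (hn : 1 < n) (p : ℕ) (hp : 0 < p) (m : ℕ) (hm : 1 < m)
    (P : Polynomial (K k n)) (hdeg : P.natDegree = m)
    (hcoeff : ∀ i : ℕ, ∀ v ∈ (P.coeff i).support, ∀ l : Fin n,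
      ∃ a : ℕ, ofLex v l = (a : ℚ) / (p : ℚ))
    (hwm : P.coeff 0 ≠ 0)
    (hvanish : ∀ t : ℕ, t ≠ 1 → ∀ v ∈ (P.coeff t).support,
      0 < ofLex v (⟨0, by omega⟩ : Fin n))
    (hwm1 : ∃ v ∈ (P.coeff 1).support, ofLex v (⟨0, by omega⟩ : Fin n) = 0) :
    ∃ f : K k n,
      (P.eval f = 0 ∧ ∀ v ∈ f.support, 0 < ofLex v (⟨0, by omega⟩ : Fin n)) ∧
      (∀ g : K k n, P.eval g = 0 →
        (∀ v ∈ g.support, 0 < ofLex v (⟨0, by omega⟩ : Fin n)) → g = f) ∧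
      ∃ Φ : (Fin n → ℚ) → (Fin n → ℚ), IsBlowUpComp n Φ ∧
        ∀ v ∈ f.support, ∀ l : Fin n, ∃ a : ℕ, Φ (ofLex v) l = (a : ℚ) / (p : ℚ) := by
  classical
  have hp' : (0:ℚ) < (p:ℚ) := by exact_mod_cast hp
  set e0 : Fin n := ⟨0, by omega⟩ with he0
  have he0n : (e0 : ℕ) = 0 := rfl
  -- first coordinate is monotone for the lexicographic order
  have hfirst : ∀ u w : Lex (Fin n → ℚ), u ≤ w → ofLex u e0 ≤ ofLex w e0 := by
    intro u w huw
    rcases eq_or_lt_of_le huw with rfl | hlt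
    · exact le_refl _
    · obtain ⟨i, hji, hi⟩ : ∃ i, (∀ j, j < i → ofLex u j = ofLex w j) ∧ ofLex u i < ofLex w i :=
        hlt
      by_cases hie : i = e0
      · subst hie; exact hi.le
      · have h0i : e0 < i := by
          rw [Fin.lt_def, he0n]
          have : (i : ℕ) ≠ 0 := fun h => hie (Fin.ext (by rw [he0n]; omega))
          omega
        exact le_of_eq (hji e0 h0i)
  have hc1ne : P.coeff 1 ≠ 0 := by
    obtain ⟨v, hv, -⟩ := hwm1
    intro h
    rw [h] at hv
    simp [HahnSeries.support_zero] at hv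
  set c1 : K k n := P.coeff 1 with hc1def
  set o : Lex (Fin n → ℚ) := c1.order with hodef
  have ho_mem : o ∈ c1.support := by
    rw [HahnSeries.mem_support]
    exact (by have := HahnSeries.leadingCoeff_ne_zero.mpr hc1ne; rwa [HahnSeries.leadingCoeff_eq] at this)
  have ho_le : ∀ v ∈ c1.support, o ≤ v := fun v hv =>
    HahnSeries.order_le_of_coeff_ne_zero ((HahnSeries.mem_support _ _).1 hv)
  choose oa hoa using hcoeff 1 o ho_mem
  have ho0' : ofLex o e0 = 0 := by
    obtain ⟨v, hv, hv0⟩ := hwm1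
    have h1 := hfirst o v (ho_le v hv)
    rw [hv0] at h1
    have h2 : 0 ≤ ofLex o e0 := by rw [hoa e0]; positivity
    linarith
  set B : ℕ := Finset.univ.sup oa with hBdef
  have hoB : ∀ l, ofLex o l ≤ (B:ℚ)/(p:ℚ) := by
    intro l
    rw [hoa l]
    have h1 : (oa l : ℚ) ≤ (B:ℚ) := by exact_mod_cast Finset.le_sup (Finset.mem_univ l)
    exact (div_le_div_iff_of_pos_right hp').2 h1
  set N : ℕ := B + 2 with hNdef
  have hNineq : ((B:ℚ)/(p:ℚ)) / (1/(p:ℚ)) + 2 ≤ (N:ℚ) := by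
    have : ((B:ℚ)/(p:ℚ)) / (1/(p:ℚ)) = (B:ℚ) := by field_simp
    rw [this, hNdef]
    push_cast
    linarith
  set Φ : (Fin n → ℚ) → (Fin n → ℚ) := phiChain n N with hΦdef
  set DD : Set (Lex (Fin n → ℚ)) :=
    {v | ∀ l : Fin n, ∃ a : ℕ, Φ (ofLex v) l = (a:ℚ)/(p:ℚ)} with hDD
  have hDD0 : (0 : Lex (Fin n → ℚ)) ∈ DD := by
    intro l
    refine ⟨0, ?_⟩
    have h0 : ofLex (0 : Lex (Fin n → ℚ)) = (0 : Fin n → ℚ) := rfl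
    rw [hΦdef, h0, phiChain_zero]
    simp
  have hDDadd : ∀ u ∈ DD, ∀ w ∈ DD, u + w ∈ DD := by
    intro u hu w hw l
    obtain ⟨a, ha⟩ := hu l
    obtain ⟨b, hb⟩ := hw l
    refine ⟨a + b, ?_⟩
    have h0 : ofLex (u + w) = ofLex u + ofLex w := rfl
    rw [hΦdef] at ha hb ⊢
    rw [h0, phiChain_add, Pi.add_apply, ha, hb]
    push_cast
    ring
  have hΦ0 : ∀ a : Fin n → ℚ, Φ a e0 = a e0 := fun a =>
    phiChain_apply_of_zero a rfl
  have hDDfc : ∀ v ∈ DD, ∃ a : ℕ, ofLex v e0 = (a:ℚ)/(p:ℚ) := by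
    intro v hv
    obtain ⟨a, ha⟩ := hv e0
    exact ⟨a, by rw [← hΦ0 (ofLex v)]; exact ha⟩
  have hDDnn : ∀ v ∈ DD, 0 ≤ ofLex v e0 := by
    intro v hv
    obtain ⟨a, ha⟩ := hDDfc v hv
    rw [ha]
    positivity
  have hstep : ∀ x : ℚ, (∃ z : ℤ, x = (z:ℚ)/(p:ℚ)) → 0 < x → 1/(p:ℚ) ≤ x := by
    rintro x ⟨z, rfl⟩ hx
    have hz : 0 < z := by
      by_contra h
      push_neg at h
      have hzq : (z:ℚ) ≤ 0 := by exact_mod_cast h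
      nlinarith [div_nonpos_of_nonpos_of_nonneg hzq hp'.le]
    have h1z : (1:ℚ) ≤ (z:ℚ) := by exact_mod_cast hz
    gcongr
  -- the key "cone" lemma : membership in DD of shifted support points
  have hshift : ∀ v : Lex (Fin n → ℚ), (∀ l, ∃ a : ℕ, ofLex v l = (a:ℚ)/(p:ℚ)) →
      (o ≤ v ∨ 0 < ofLex v e0) → (v - o) ∈ DD := by
    intro v hv hcase
    choose va hva using hv
    have hint : ∀ i, ∃ z : ℤ, (ofLex v - ofLex o) i = (z:ℚ)/(p:ℚ) := by
      intro i
      refine ⟨(va i : ℤ) - (oa i : ℤ), ?_⟩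
      rw [Pi.sub_apply, hva, hoa]
      push_cast
      ring
    have hge : ∀ i, -((B:ℚ)/(p:ℚ)) ≤ (ofLex v - ofLex o) i := by
      intro i
      rw [Pi.sub_apply]
      have h1 : 0 ≤ ofLex v i := by rw [hva]; positivity
      linarith [hoB i]
    by_cases hveq : v = o
    · rw [hveq, sub_self]
      exact hDD0
    · have hq : ∃ q : Fin n, (∀ l, l < q → (ofLex v - ofLex o) l = 0) ∧
          0 < (ofLex v - ofLex o) q := by
        rcases hcase with hle | hpos
        · have hlt : o < v := lt_of_le_of_ne hle (Ne.symm hveq)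
          obtain ⟨i, hji, hi⟩ : ∃ i, (∀ j, j < i → ofLex o j = ofLex v j) ∧
              ofLex o i < ofLex v i := hlt
          exact ⟨i, fun l hl => by rw [Pi.sub_apply, hji l hl]; ring,
            by rw [Pi.sub_apply]; linarith⟩
        · refine ⟨e0, fun l hl => absurd hl ?_, by rw [Pi.sub_apply, ho0']; linarith⟩
          rw [Fin.lt_def, he0n]
          omega
      obtain ⟨q, hq1, hq2⟩ := hq
      have h1p : 1/(p:ℚ) ≤ (ofLex v - ofLex o) q := hstep _ (hint q) hq2
      have hnn := phiChain_nonneg (n := n) (N := N) (ofLex v - ofLex o) q (1/(p:ℚ))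
        ((B:ℚ)/(p:ℚ)) (by positivity) (by positivity) hNineq h1p hq1 hge
      intro l
      obtain ⟨z, hz⟩ := phiChain_int (p := p) (N := N) (ofLex v - ofLex o) hint l
      have hsub : ofLex (v - o) = ofLex v - ofLex o := rfl
      rw [hΦdef, hsub]
      exact rat_nonneg_int_div hp _ (hnn l) z hz
  -- supports of the coefficients
  have hsuppDD : ∀ t : ℕ, (P.coeff t).support ⊆ DD := by
    intro t v hv l
    choose va hva using hcoeff t v hv
    obtain ⟨b, hb⟩ := phiChain_nat (p := p) (N := N) (ofLex v) (fun i => ⟨va i, hva i⟩) l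
    exact ⟨b, by rw [hΦdef]; exact hb⟩
  have hsuppV0 : ∀ t : ℕ, ∀ v ∈ (P.coeff t).support, 0 ≤ ofLex v e0 := by
    intro t v hv
    obtain ⟨a, ha⟩ := hcoeff t v hv e0
    rw [ha]
    positivity
  have hsupp1p : ∀ t : ℕ, t ≠ 1 → ∀ v ∈ (P.coeff t).support, 1/(p:ℚ) ≤ ofLex v e0 := by
    intro t ht v hv
    exact hstep _ (by obtain ⟨a, ha⟩ := hcoeff t v hv e0; exact ⟨a, by rw [ha]; push_cast; ring⟩)
      (hvanish t ht v hv)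
  have hsuppShift : ∀ t : ℕ, t ≠ 1 → ∀ v ∈ (P.coeff t).support, v - o ∈ DD := by
    intro t ht v hv
    exact hshift v (hcoeff t v hv) (Or.inr (hvanish t ht v hv))
  have hsuppShift1 : ∀ v ∈ c1.support, v - o ∈ DD := by
    intro v hv
    exact hshift v (hcoeff 1 v hv) (Or.inl (ho_le v hv))
  -- explicit inverse of c1
  have hlc : c1.leadingCoeff ≠ 0 := by
    rw [HahnSeries.leadingCoeff_eq]
    exact (by have := HahnSeries.leadingCoeff_ne_zero.mpr hc1ne; rwa [HahnSeries.leadingCoeff_eq] at this)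
  set z : K k n := 1 - HahnSeries.single (-o) (c1.leadingCoeff)⁻¹ * c1 with hzdef
  have hz_ot : 0 < z.orderTop := HahnSeries.unit_aux c1 (inv_mul_cancel₀ hlc) _ (neg_add_cancel c1.order)
  have hzsupp : z.support ⊆ DD := by
    rw [hzdef]
    refine supp_sub' (supp_one' hDD0) ?_
    refine supp_mul' HahnSeries.support_single_subset (fun w hw => hw) ?_
    rintro s hs t ht
    rw [Set.mem_singleton_iff] at hs
    subst hs
    rw [neg_add_eq_sub]
    exact hsuppShift1 t ht
  set pz := HahnSeries.SummableFamily.powers z with hpzdef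
  set u' : K k n := pz.hsum * HahnSeries.single (-o) (c1.leadingCoeff)⁻¹ with hu'def
  have hu'c1 : u' * c1 = 1 := by
    rw [hu'def, mul_assoc]
    have h1 : HahnSeries.single (-o) (c1.leadingCoeff)⁻¹ * c1 = 1 - z := by
      rw [hzdef]
      ring
    rw [h1, mul_comm]
    exact HahnSeries.SummableFamily.one_sub_self_mul_hsum_powers hz_ot
  have hhsum_supp : pz.hsum.support ⊆ DD := by
    intro v hv
    obtain ⟨Sk, hSk⟩ := Set.mem_iUnion.1 (HahnSeries.SummableFamily.support_hsum_subset hv)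
    have hSk' : v ∈ (z ^ Sk).support := by
      rw [← HahnSeries.SummableFamily.powers_of_orderTop_pos hz_ot]; exact hSk
    exact supp_pow' hDD0 (fun s hs t ht => hDDadd s hs t ht) hzsupp Sk hSk'
  have hu'supp : u'.support ⊆ {w | w + o ∈ DD} := by
    rw [hu'def]
    refine supp_mul' hhsum_supp HahnSeries.support_single_subset ?_
    rintro s hs t ht
    rw [Set.mem_singleton_iff] at ht
    subst ht
    show (s + -o) + o ∈ DD
    rw [add_assoc, neg_add_cancel, add_zero]
    exact hs
  have hu'V0 : ∀ v ∈ u'.support, 0 ≤ ofLex v e0 := by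
    intro v hv
    have h1 := hu'supp hv
    have h2 := hDDnn _ h1
    have h3 : ofLex (v + o) e0 = ofLex v e0 + ofLex o e0 := rfl
    rw [h3, ho0', add_zero] at h2
    exact h2
  -- the Newton-type iteration
  set F : ℕ → K k n := fun j => Nat.rec (0 : K k n) (fun _ x => x - u' * P.eval x) j with hFdef
  have hF0 : F 0 = 0 := rfl
  have hFs : ∀ j, F (j + 1) = F j - u' * P.eval (F j) := fun j => rfl
  have hdlt : P.natDegree < m + 1 := by rw [hdeg]; omega
  set REST : K k n → K k n → K k n := fun x d => ∑ t ∈ (Finset.range (m+1)).erase 1,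
    P.coeff t * ∑ j ∈ Finset.range t, ((t.choose (j+1) : K k n)) * x^(t-1-j) * d^j with hRESTdef
  have hRemSplit : ∀ x d : K k n, polyRem P (m+1) x d = REST x d + c1 := by
    intro x d
    rw [polyRem, ← Finset.sum_erase_add _ _ (Finset.mem_range.2 (by omega : 1 < m + 1))]
    congr 1
    simp [Finset.sum_range_one, hc1def]
  have hRestSupp : ∀ x d : K k n, x.support ⊆ DD → d.support ⊆ DD →
      (REST x d).support ⊆ {v | v - o ∈ DD ∧ 1/(p:ℚ) ≤ ofLex v e0} := by
    intro x d hx hd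
    rw [hRESTdef]
    refine supp_sum' ?_
    intro t ht
    have ht1 : t ≠ 1 := (Finset.mem_erase.1 ht).1
    have hct : (P.coeff t).support ⊆ {v | v - o ∈ DD ∧ 1/(p:ℚ) ≤ ofLex v e0} :=
      fun v hv => ⟨hsuppShift t ht1 v hv, hsupp1p t ht1 v hv⟩
    have hg : (∑ j ∈ Finset.range t,
        ((t.choose (j+1) : K k n)) * x^(t-1-j) * d^j).support ⊆ DD := by
      refine supp_sum' ?_
      intro j _
      refine supp_mul' (supp_mul' (supp_natCast' hDD0 _)
        (supp_pow' hDD0 (fun s hs w hw => hDDadd s hs w hw) hx _)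
        (fun s hs w hw => hDDadd s hs w hw)) (supp_pow' hDD0
        (fun s hs w hw => hDDadd s hs w hw) hd _)
        (fun s hs w hw => hDDadd s hs w hw)
    refine supp_mul' hct hg ?_
    rintro s ⟨hs1, hs2⟩ w hw
    constructor
    · have he : s + w - o = (s - o) + w := add_sub_right_comm s w o
      rw [he]
      exact hDDadd _ hs1 _ hw
    · have he : ofLex (s + w) e0 = ofLex s e0 + ofLex w e0 := rfl
      rw [he]
      linarith [hDDnn w hw]
  -- the fundamental induction
  have hInv : ∀ j : ℕ, ((F j).support ⊆ {v | v ∈ DD ∧ 1/(p:ℚ) ≤ ofLex v e0}) ∧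
      ((P.eval (F j)).support ⊆ {v | v - o ∈ DD ∧ ((j:ℚ)+1)/(p:ℚ) ≤ ofLex v e0}) := by
    intro j
    induction j with
    | zero =>
      constructor
      · rw [hF0, HahnSeries.support_zero]
        exact Set.empty_subset _
      · rw [hF0, ← Polynomial.coeff_zero_eq_eval_zero]
        intro v hv
        refine ⟨hsuppShift 0 (by omega) v hv, ?_⟩
        have h1 := hsupp1p 0 (by omega) v hv
        push_cast
        linarith
    | succ j ih =>
      obtain ⟨ih1, ih2⟩ := ih
      have hdsupp : (-(u' * P.eval (F j))).support
          ⊆ {v | v ∈ DD ∧ ((j:ℚ)+1)/(p:ℚ) ≤ ofLex v e0} := by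
        refine supp_neg' ?_
        refine supp_mul' (fun v hv => (⟨hu'supp hv, hu'V0 v hv⟩ :
          v ∈ {w | w + o ∈ DD ∧ 0 ≤ ofLex w e0})) ih2 ?_
        rintro s ⟨hs1, hs2⟩ w ⟨hw1, hw2⟩
        constructor
        · have he : s + w = (s + o) + (w - o) := by abel
          rw [he]
          exact hDDadd _ hs1 _ hw1
        · have he : ofLex (s + w) e0 = ofLex s e0 + ofLex w e0 := rfl
          rw [he]
          linarith
      have hFsucc : F (j+1) = F j + -(u' * P.eval (F j)) := by
        rw [hFs j]
        ring
      constructor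
      · rw [hFsucc]
        refine supp_add' ih1 ?_
        intro v hv
        obtain ⟨h1, h2⟩ := hdsupp hv
        refine ⟨h1, le_trans ?_ h2⟩
        rw [div_le_div_iff_of_pos_right hp']
        push_cast
        linarith
      · have hEval : P.eval (F (j+1)) = -(u' * P.eval (F j)) * REST (F j) (-(u' * P.eval (F j))) := by
          rw [hFsucc, eval_add_expand P hdlt (F j) _, hRemSplit (F j) _, mul_add]
          have hdc1 : -(u' * P.eval (F j)) * c1 = -(P.eval (F j)) := by
            calc -(u' * P.eval (F j)) * c1 = -(P.eval (F j)) * (u' * c1) := by ring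
              _ = -(P.eval (F j)) := by rw [hu'c1, mul_one]
          rw [hdc1]
          ring
        rw [hEval]
        refine supp_mul' hdsupp (hRestSupp (F j) _ (fun v hv => (ih1 hv).1)
          (fun v hv => (hdsupp hv).1)) ?_
        rintro s ⟨hs1, hs2⟩ w ⟨hw1, hw2⟩
        constructor
        · have he : s + w - o = s + (w - o) := by abel
          rw [he]
          exact hDDadd _ hs1 _ hw1
        · have he : ofLex (s + w) e0 = ofLex s e0 + ofLex w e0 := rfl
          rw [he]
          have hsum : ((j:ℚ)+1)/(p:ℚ) + 1/(p:ℚ) = ((j:ℚ)+1+1)/(p:ℚ) := by ring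
          push_cast
          linarith
  -- the difference family
  set dseq : ℕ → K k n := fun j => F (j+1) - F j with hdseqdef
  have hdseq_eq : ∀ j, dseq j = -(u' * P.eval (F j)) := by
    intro j
    simp only [hdseqdef]
    rw [hFs j]
    ring
  have hdseq_supp : ∀ j, (dseq j).support ⊆
      {v | v ∈ DD ∧ ((j:ℚ)+1)/(p:ℚ) ≤ ofLex v e0} := by
    intro j
    rw [hdseq_eq j]
    refine supp_neg' ?_
    refine supp_mul' (fun v hv => (⟨hu'supp hv, hu'V0 v hv⟩ :
      v ∈ {w | w + o ∈ DD ∧ 0 ≤ ofLex w e0})) (hInv j).2 ?_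
    rintro s ⟨hs1, hs2⟩ w ⟨hw1, hw2⟩
    constructor
    · have he : s + w = (s + o) + (w - o) := by abel
      rw [he]
      exact hDDadd _ hs1 _ hw1
    · have he : ofLex (s + w) e0 = ofLex s e0 + ofLex w e0 := rfl
      rw [he]
      linarith
  have hdseq_DD : ∀ j, (dseq j).support ⊆ DD := fun j v hv => (hdseq_supp j hv).1
  have hiPWO : Set.IsPWO (⋃ j : ℕ, (dseq j).support) := by
    rw [Set.isPWO_iff_isWF, Set.isWF_iff_no_descending_seq]
    intro g hg hmem
    have hmem' : ∀ i : ℕ, g i ∈ ⋃ j : ℕ, (dseq j).support := fun i => hmem i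
    have hnum : ∀ i : ℕ, ∃ a : ℕ, ofLex (g i) e0 = (a:ℚ)/(p:ℚ) ∧
        ∀ jj, g i ∈ (dseq jj).support → jj < a := by
      intro i
      obtain ⟨jj, hjj⟩ := Set.mem_iUnion.1 (hmem' i)
      obtain ⟨hDDm, _⟩ := hdseq_supp jj hjj
      obtain ⟨a, ha⟩ := hDDfc _ hDDm
      refine ⟨a, ha, ?_⟩
      intro j2 hj2
      have h2 := (hdseq_supp j2 hj2).2
      rw [ha, div_le_div_iff_of_pos_right hp'] at h2
      have h3 : (j2:ℚ) + 1 ≤ (a:ℚ) := h2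
      have h4 : j2 + 1 ≤ a := by exact_mod_cast h3
      omega
    choose b hb1 hb2 using hnum
    have hbanti : ∀ i i2 : ℕ, i ≤ i2 → b i2 ≤ b i := by
      intro i i2 hii
      have h1 := hfirst _ _ (hg.antitone hii)
      rw [hb1 i, hb1 i2, div_le_div_iff_of_pos_right hp'] at h1
      exact_mod_cast h1
    obtain ⟨i0, hbi0⟩ : ∃ i0, b i0 = sInf (Set.range b) := by
      have hne : (Set.range b).Nonempty := ⟨b 0, ⟨0, rfl⟩⟩
      obtain ⟨i0, hi0⟩ := Nat.sInf_mem hne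
      exact ⟨i0, hi0⟩
    have hi0 : ∀ i, i0 ≤ i → b i = b i0 := by
      intro i hi
      refine le_antisymm (hbanti i0 i hi) ?_
      rw [hbi0]
      exact Nat.sInf_le ⟨i, rfl⟩
    have hWFfin : ∀ s : Finset ℕ, Set.IsWF (⋃ j ∈ s, (dseq j).support) := by
      intro s
      induction s using Finset.induction_on with
      | empty => simp [Set.isWF_empty]
      | insert _ _ hna ih =>
        rw [Finset.set_biUnion_insert]
        exact (HahnSeries.isWF_support _).union ih
    have hW := hWFfin (Finset.range (b i0))
    replace hW := Set.isWF_iff_no_descending_seq.1 hW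
    refine hW (fun i => g (i0 + i)) (fun i1 i2 h12 => hg (by omega)) ?_
    intro i
    obtain ⟨jj, hjj⟩ := Set.mem_iUnion.1 (hmem' (i0 + i))
    have hlt : jj < b (i0 + i) := hb2 (i0+i) jj hjj
    rw [hi0 (i0+i) (by omega)] at hlt
    exact Set.mem_biUnion (Finset.mem_range.2 hlt) hjj
  have hfin : ∀ gv : Lex (Fin n → ℚ), {j | (dseq j).coeff gv ≠ 0}.Finite := by
    intro gv
    by_cases hgv : ∃ j, (dseq j).coeff gv ≠ 0
    · obtain ⟨j0, hj0⟩ := hgv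
      have hmem : gv ∈ (dseq j0).support := hj0
      obtain ⟨a, ha⟩ := hDDfc _ (hdseq_DD j0 hmem)
      refine Set.Finite.subset (Set.finite_Iio a) ?_
      intro j2 hj2
      have h2 := (hdseq_supp j2 hj2).2
      rw [ha, div_le_div_iff_of_pos_right hp'] at h2
      have h3 : j2 + 1 ≤ a := by exact_mod_cast h2
      exact Set.mem_Iio.2 (by omega)
    · push_neg at hgv
      refine Set.Finite.subset Set.finite_empty ?_
      intro j hj
      exact (hj (hgv j)).elim
  set fam : HahnSeries.SummableFamily (Lex (Fin n → ℚ)) k ℕ := ⟨dseq, hiPWO, hfin⟩ with hfamdef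
  have htel : ∀ j, F j = ∑ i ∈ Finset.range j, dseq i := by
    intro j
    induction j with
    | zero => rw [hF0, Finset.range_zero, Finset.sum_empty]
    | succ j ih =>
      rw [Finset.sum_range_succ, ← ih]
      simp only [hdseqdef]
      abel
  have hcoeff_sum : ∀ (s : Finset ℕ) (gv : Lex (Fin n → ℚ)),
      (∑ i ∈ s, dseq i).coeff gv = ∑ i ∈ s, (dseq i).coeff gv := by
    intro s gv
    induction s using Finset.induction_on with
    | empty => simp
    | insert _ _ hna ih =>
      rw [Finset.sum_insert hna, Finset.sum_insert hna, HahnSeries.coeff_add, ih]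
  have hdiff : ∀ j : ℕ, (fam.hsum - F j).support ⊆
      {v | v ∈ DD ∧ ((j:ℚ)+1)/(p:ℚ) ≤ ofLex v e0} := by
    intro j v hv
    have hne : (fam.hsum - F j).coeff v ≠ 0 := hv
    have hex : ∃ i, j ≤ i ∧ v ∈ (dseq i).support := by
      by_contra hcon
      push_neg at hcon
      have h1 : {i : ℕ | (fam i).coeff v ≠ 0} ⊆ (Finset.range j : Set ℕ) := by
        intro i hi
        simp only [Finset.coe_range, Set.mem_Iio]
        by_contra hij
        push_neg at hij
        exact hcon i hij hi
      have h2 := HahnSeries.SummableFamily.coeff_hsum_eq_sum_of_subset (s := fam)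
        (g := v) (t := Finset.range j) h1
      apply hne
      rw [HahnSeries.coeff_sub, h2, htel j, hcoeff_sum]
      exact sub_self _
    obtain ⟨i, hji, hvi⟩ := hex
    obtain ⟨h1, h2⟩ := hdseq_supp i hvi
    refine ⟨h1, le_trans ?_ h2⟩
    rw [div_le_div_iff_of_pos_right hp']
    have : (j:ℚ) ≤ (i:ℚ) := by exact_mod_cast hji
    linarith
  have hfsupp : fam.hsum.support ⊆ {v | v ∈ DD ∧ 1/(p:ℚ) ≤ ofLex v e0} := by
    intro v hv
    have hv' : v ∈ (fam.hsum - F 0).support := by rw [hF0, sub_zero]; exact hv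
    obtain ⟨h1, h2⟩ := hdiff 0 hv'
    refine ⟨h1, le_trans ?_ h2⟩
    norm_num
  have h1ppos : 0 < 1/(p:ℚ) := div_pos one_pos hp'
  -- the support set {v | 0 ≤ first coordinate} and the remainder's support
  have hV00 : (0 : Lex (Fin n → ℚ)) ∈ {v : Lex (Fin n → ℚ) | 0 ≤ ofLex v e0} := by
    show (0:ℚ) ≤ ofLex (0 : Lex (Fin n → ℚ)) e0
    exact le_refl 0
  have hV0add : ∀ s ∈ {v : Lex (Fin n → ℚ) | 0 ≤ ofLex v e0},
      ∀ w ∈ {v : Lex (Fin n → ℚ) | 0 ≤ ofLex v e0},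
      s + w ∈ {v : Lex (Fin n → ℚ) | 0 ≤ ofLex v e0} := by
    intro s hs w hw
    show 0 ≤ ofLex (s + w) e0
    have he : ofLex (s + w) e0 = ofLex s e0 + ofLex w e0 := rfl
    rw [he]
    exact add_nonneg hs hw
  have hRemV0 : ∀ x d : K k n, x.support ⊆ {v | 0 ≤ ofLex v e0} →
      d.support ⊆ {v | 0 ≤ ofLex v e0} →
      (polyRem P (m+1) x d).support ⊆ {v : Lex (Fin n → ℚ) | 0 ≤ ofLex v e0} := by
    intro x d hx hd
    rw [polyRem]
    refine supp_sum' ?_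
    intro t _
    refine supp_mul' (fun w hw => hsuppV0 t w hw) ?_ hV0add
    refine supp_sum' ?_
    intro j2 _
    exact supp_mul' (supp_mul' (supp_natCast' hV00 _) (supp_pow' hV00 hV0add hx _) hV0add)
      (supp_pow' hV00 hV0add hd _) hV0add
  -- fam.hsum is a root
  have hroot : P.eval fam.hsum = 0 := by
    by_contra hron
    obtain ⟨v, hv⟩ := HahnSeries.support_nonempty_iff.2 hron
    have hbound : ∀ j : ℕ, ((j:ℚ)+1)/(p:ℚ) ≤ ofLex v e0 := by
      intro j
      have hEval : P.eval fam.hsum = P.eval (F j) +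
          (fam.hsum - F j) * polyRem P (m+1) (F j) (fam.hsum - F j) := by
        rw [← eval_add_expand P hdlt]
        congr 1
        abel
      have hfinal : (P.eval fam.hsum).support ⊆
          {w : Lex (Fin n → ℚ) | ((j:ℚ)+1)/(p:ℚ) ≤ ofLex w e0} := by
        rw [hEval]
        refine supp_add' (fun w hw => ((hInv j).2 hw).2) ?_
        refine supp_mul' (fun w hw => (hdiff j hw).2)
          (hRemV0 (F j) _ (fun w hw => le_trans h1ppos.le ((hInv j).1 hw).2)
            (fun w hw => le_trans (by positivity) (hdiff j hw).2)) ?_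
        intro s hs w hw
        show ((j:ℚ)+1)/(p:ℚ) ≤ ofLex (s + w) e0
        have he : ofLex (s + w) e0 = ofLex s e0 + ofLex w e0 := rfl
        rw [he]
        have hs' : ((j:ℚ)+1)/(p:ℚ) ≤ ofLex s e0 := hs
        have hw' : (0:ℚ) ≤ ofLex w e0 := hw
        linarith
      exact hfinal hv
    obtain ⟨j, hj⟩ := exists_nat_gt ((p:ℚ) * ofLex v e0)
    have h2 := hbound j
    rw [div_le_iff₀ hp'] at h2
    have h3 : ofLex v e0 * (p:ℚ) = (p:ℚ) * ofLex v e0 := mul_comm _ _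
    linarith
  -- uniqueness
  have huniq : ∀ gg : K k n, P.eval gg = 0 →
      (∀ v ∈ gg.support, 0 < ofLex v e0) → gg = fam.hsum := by
    intro gg hgg hggpos
    by_contra hne
    have hdne : gg - fam.hsum ≠ 0 := sub_ne_zero.2 hne
    have hEval : (0 : K k n) =
        (gg - fam.hsum) * polyRem P (m+1) fam.hsum (gg - fam.hsum) := by
      have h1 := eval_add_expand P hdlt fam.hsum (gg - fam.hsum)
      have h2 : fam.hsum + (gg - fam.hsum) = gg := by ring
      rw [h2, hgg, hroot, zero_add] at h1
      exact h1
    have hRem0 : polyRem P (m+1) fam.hsum (gg - fam.hsum) = 0 := by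
      rcases mul_eq_zero.1 hEval.symm with h | h
      · exact absurd h hdne
      · exact h
    have hsplit := hRemSplit fam.hsum (gg - fam.hsum)
    rw [hRem0] at hsplit
    have hc1eq : c1 = -(REST fam.hsum (gg - fam.hsum)) :=
      eq_neg_of_add_eq_zero_right hsplit.symm
    have hgsuppV0 : gg.support ⊆ {v : Lex (Fin n → ℚ) | 0 ≤ ofLex v e0} :=
      fun v hv => (hggpos v hv).le
    have hfsuppV0 : fam.hsum.support ⊆ {v : Lex (Fin n → ℚ) | 0 ≤ ofLex v e0} :=
      fun v hv => le_trans h1ppos.le (hfsupp hv).2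
    have hdsuppV0 : (gg - fam.hsum).support ⊆ {v : Lex (Fin n → ℚ) | 0 ≤ ofLex v e0} :=
      supp_sub' hgsuppV0 hfsuppV0
    have hRESTpos : (REST fam.hsum (gg - fam.hsum)).support ⊆
        {v : Lex (Fin n → ℚ) | 0 < ofLex v e0} := by
      rw [hRESTdef]
      refine supp_sum' ?_
      intro t ht
      have ht1 := (Finset.mem_erase.1 ht).1
      refine supp_mul' (T := {v : Lex (Fin n → ℚ) | 0 ≤ ofLex v e0})
        (fun w hw => hvanish t ht1 w hw) ?_ ?_
      · refine supp_sum' ?_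
        intro j2 _
        exact supp_mul' (supp_mul' (supp_natCast' hV00 _)
          (supp_pow' hV00 hV0add hfsuppV0 _) hV0add)
          (supp_pow' hV00 hV0add hdsuppV0 _) hV0add
      · intro s hs w hw
        show 0 < ofLex (s + w) e0
        have he : ofLex (s + w) e0 = ofLex s e0 + ofLex w e0 := rfl
        rw [he]
        have hs' : 0 < ofLex s e0 := hs
        have hw' : 0 ≤ ofLex w e0 := hw
        linarith
    obtain ⟨v0, hv0mem, hv0zero⟩ := hwm1
    rw [hc1eq] at hv0mem
    rw [HahnSeries.support_neg] at hv0mem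
    have hcontra := hRESTpos hv0mem
    rw [Set.mem_setOf_eq, hv0zero] at hcontra
    exact lt_irrefl 0 hcontra
  refine ⟨fam.hsum, ⟨hroot, fun v hv => lt_of_lt_of_le h1ppos (hfsupp hv).2⟩,
    huniq, Φ, ?_, fun v hv l => (hfsupp hv).1 l⟩
  rw [hΦdef]
  exact phiChain_isBlowUpComp
end
end

section
/- Let k be an algebraically closed field of characteristic zero and n > 1. For Γ, Γ' ∈ Λ and positive integers d, d', one has k[[Γ,d]] ⊆ k[[Γ',d']] if and only if Γ ⊆ Γ' and d divides d'. Consequently the family of rings k[[Γ,d]], with the inclusions, is a direct system of k-algebras. -/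
noncomputable section

noncomputable instance (n : ℕ) : IsOrderedCancelAddMonoid (Lex (Fin n → ℚ)) :=
  inferInstance

/-- `k[[Γ,d]]` for the `S`-cone `Γ = Φ(ℚ_{≥0}^n)`, `Φ ∈ 𝒮`: the set of Hahn series
whose Newton diagram (support) is contained in `Γ ∩ (1/d)ℤ^n`. -/
def piece (k : Type*) [Field k] (n : ℕ) (Φ : (Fin n → ℚ) → (Fin n → ℚ)) (d : ℕ) :
    Set (K k n) :=
  {f | ∀ v ∈ f.support,
    ofLex v ∈ Φ '' {u : Fin n → ℚ | ∀ l, 0 ≤ u l} ∧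
    ∀ l : Fin n, ∃ a : ℤ, ofLex v l = (a : ℚ) / (d : ℚ)}

namespace PieceAux

variable {n : ℕ}

/-- linear map version of blowUp -/
def blowUpLM (n : ℕ) (i j : Fin n) : (Fin n → ℚ) →ₗ[ℚ] (Fin n → ℚ) where
  toFun := blowUp n i j
  map_add' a b := by funext l; simp only [blowUp, Pi.add_apply]; split_ifs <;> ring
  map_smul' c a := by
    funext l; simp only [blowUp, Pi.smul_apply, smul_eq_mul, RingHom.id_apply]
    split_ifs <;> ring

def blowDownLM (n : ℕ) (i j : Fin n) : (Fin n → ℚ) →ₗ[ℚ] (Fin n → ℚ) where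
  toFun := blowDown n i j
  map_add' a b := by funext l; simp only [blowDown, Pi.add_apply]; split_ifs <;> ring
  map_smul' c a := by
    funext l; simp only [blowDown, Pi.smul_apply, smul_eq_mul, RingHom.id_apply]
    split_ifs <;> ring

lemma foldr_comp_linear (L : List ((Fin n → ℚ) → (Fin n → ℚ)))
    (h : ∀ g ∈ L, ∃ T : (Fin n → ℚ) →ₗ[ℚ] (Fin n → ℚ), g = ⇑T) :
    ∃ T : (Fin n → ℚ) →ₗ[ℚ] (Fin n → ℚ), L.foldr (· ∘ ·) id = ⇑T := by
  induction L with
  | nil => exact ⟨LinearMap.id, rfl⟩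
  | cons g t ih =>
    obtain ⟨T, hT⟩ := ih fun x hx => h x (List.mem_cons_of_mem _ hx)
    obtain ⟨S, hS⟩ := h g List.mem_cons_self
    refine ⟨S.comp T, ?_⟩
    simp only [List.foldr_cons, hT, hS]
    rfl

lemma isBlowUpComp_linear {Φ : (Fin n → ℚ) → (Fin n → ℚ)} (h : IsBlowUpComp n Φ) :
    ∃ T : (Fin n → ℚ) →ₗ[ℚ] (Fin n → ℚ), Φ = ⇑T := by
  obtain ⟨L, hL, rfl⟩ := h
  exact foldr_comp_linear L fun g hg => by
    obtain ⟨i, j, _, rfl⟩ := hL g hg; exact ⟨blowUpLM n i j, rfl⟩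

lemma isBlowDownComp_linear {Φ : (Fin n → ℚ) → (Fin n → ℚ)} (h : IsBlowDownComp n Φ) :
    ∃ T : (Fin n → ℚ) →ₗ[ℚ] (Fin n → ℚ), Φ = ⇑T := by
  obtain ⟨L, hL, rfl⟩ := h
  exact foldr_comp_linear L fun g hg => by
    obtain ⟨i, j, _, rfl⟩ := hL g hg; exact ⟨blowDownLM n i j, rfl⟩

lemma foldr_comp_append (L₁ L₂ : List ((Fin n → ℚ) → (Fin n → ℚ))) :
    (L₁ ++ L₂).foldr (· ∘ ·) id = (L₁.foldr (· ∘ ·) id) ∘ (L₂.foldr (· ∘ ·) id) := by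
  induction L₁ with
  | nil => simp
  | cons g t ih => simp [List.foldr_cons, ih, Function.comp_assoc]

lemma foldr_replicate (m : ℕ) (g : (Fin n → ℚ) → (Fin n → ℚ)) :
    (List.replicate m g).foldr (· ∘ ·) id = g^[m] := by
  induction m with
  | zero => rfl
  | succ m ih => rw [List.replicate_succ, List.foldr_cons, ih, Function.iterate_succ']

lemma isBlowUpComp_comp {Φ Ψ : (Fin n → ℚ) → (Fin n → ℚ)}
    (h1 : IsBlowUpComp n Φ) (h2 : IsBlowUpComp n Ψ) : IsBlowUpComp n (Φ ∘ Ψ) := by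
  obtain ⟨L₁, hL₁, rfl⟩ := h1
  obtain ⟨L₂, hL₂, rfl⟩ := h2
  exact ⟨L₁ ++ L₂, fun g hg => (List.mem_append.mp hg).elim (hL₁ g) (hL₂ g),
    (foldr_comp_append L₁ L₂).symm⟩

lemma isBlowDownComp_comp {Φ Ψ : (Fin n → ℚ) → (Fin n → ℚ)}
    (h1 : IsBlowDownComp n Φ) (h2 : IsBlowDownComp n Ψ) : IsBlowDownComp n (Φ ∘ Ψ) := by
  obtain ⟨L₁, hL₁, rfl⟩ := h1
  obtain ⟨L₂, hL₂, rfl⟩ := h2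
  exact ⟨L₁ ++ L₂, fun g hg => (List.mem_append.mp hg).elim (hL₁ g) (hL₂ g),
    (foldr_comp_append L₁ L₂).symm⟩

lemma isBlowUpComp_id : IsBlowUpComp n id := ⟨[], by simp, rfl⟩
lemma isBlowDownComp_id : IsBlowDownComp n id := ⟨[], by simp, rfl⟩

lemma blowDown_blowUp (i j : Fin n) (hij : i ≠ j) (a : Fin n → ℚ) :
    blowDown n i j (blowUp n i j a) = a := by
  funext l
  simp only [blowDown, blowUp]
  by_cases h : l = j
  · simp [h, hij, if_neg hij]
  · simp [h]

lemma exists_leftInv_list :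
    ∀ L : List ((Fin n → ℚ) → (Fin n → ℚ)),
      (∀ g ∈ L, ∃ i j : Fin n, i < j ∧ g = blowUp n i j) →
      ∃ Ψ, IsBlowDownComp n Ψ ∧ ∀ a, Ψ (L.foldr (· ∘ ·) id a) = a := by
  intro L
  induction L with
  | nil => exact fun _ => ⟨id, isBlowDownComp_id, fun a => rfl⟩
  | cons g t ih =>
    intro hL
    obtain ⟨Ψ, hΨ, hinv⟩ := ih fun x hx => hL x (List.mem_cons_of_mem _ hx)
    obtain ⟨i, j, hij, rfl⟩ := hL g List.mem_cons_self
    refine ⟨Ψ ∘ blowDown n i j, isBlowDownComp_comp hΨ ⟨[blowDown n i j], ?_, rfl⟩, fun a => ?_⟩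
    · intro x hx
      simp only [List.mem_singleton] at hx
      exact ⟨i, j, hij, by rw [hx]⟩
    · simp only [List.foldr_cons, Function.comp_apply]
      rw [blowDown_blowUp i j hij.ne, hinv]

lemma isBlowUpComp_exists_leftInv {Φ : (Fin n → ℚ) → (Fin n → ℚ)} (h : IsBlowUpComp n Φ) :
    ∃ Ψ, IsBlowDownComp n Ψ ∧ ∀ a, Ψ (Φ a) = a := by
  obtain ⟨L, hL, rfl⟩ := h
  exact exists_leftInv_list L hL

end PieceAux


namespace PieceAux

variable {n : ℕ}

lemma blowUp_nonneg (i j : Fin n) (a : Fin n → ℚ) (ha : ∀ l, 0 ≤ a l) :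
    ∀ l, 0 ≤ blowUp n i j a l := by
  intro l
  simp only [blowUp]
  split_ifs
  · exact add_nonneg (ha i) (ha j)
  · exact ha l

lemma foldr_nonneg (L : List ((Fin n → ℚ) → (Fin n → ℚ)))
    (hL : ∀ g ∈ L, ∃ i j : Fin n, i < j ∧ g = blowUp n i j)
    (a : Fin n → ℚ) (ha : ∀ l, 0 ≤ a l) : ∀ l, 0 ≤ L.foldr (· ∘ ·) id a l := by
  induction L with
  | nil => exact ha
  | cons g t ih =>
    obtain ⟨i, j, _, rfl⟩ := hL g List.mem_cons_self
    exact blowUp_nonneg i j _ (ih fun x hx => hL x (List.mem_cons_of_mem _ hx))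

lemma isBlowUpComp_nonneg {Φ : (Fin n → ℚ) → (Fin n → ℚ)} (h : IsBlowUpComp n Φ)
    (a : Fin n → ℚ) (ha : ∀ l, 0 ≤ a l) : ∀ l, 0 ≤ Φ a l := by
  obtain ⟨L, hL, rfl⟩ := h
  exact foldr_nonneg L hL a ha

/-- lexicographic nonnegativity -/
def LexNN (v : Fin n → ℚ) : Prop :=
  (∀ l, v l = 0) ∨ ∃ i, (∀ l, l < i → v l = 0) ∧ 0 < v i

lemma lexNN_of_nonneg {v : Fin n → ℚ} (hv : ∀ l, 0 ≤ v l) : LexNN v := by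
  by_cases h : ∀ l, v l = 0
  · exact Or.inl h
  push_neg at h
  have hne : (Finset.univ.filter (fun l => v l ≠ 0)).Nonempty := by
    obtain ⟨j, hj⟩ := h
    exact ⟨j, Finset.mem_filter.mpr ⟨Finset.mem_univ j, hj⟩⟩
  refine Or.inr ⟨(Finset.univ.filter (fun l => v l ≠ 0)).min' hne, fun l hl => ?_, ?_⟩
  · by_contra h0
    exact absurd (Finset.min'_le _ l (Finset.mem_filter.mpr ⟨Finset.mem_univ l, h0⟩))
      (not_le.mpr hl)
  · have := (Finset.mem_filter.mp ((Finset.univ.filter (fun l => v l ≠ 0)).min'_mem hne)).2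
    exact lt_of_le_of_ne (hv _) (Ne.symm this)

lemma lexNN_blowUp (i j : Fin n) (hij : i < j) {v : Fin n → ℚ} (hv : LexNN v) :
    LexNN (blowUp n i j v) := by
  rcases hv with h0 | ⟨p, hp0, hpp⟩
  · refine Or.inl fun l => ?_
    simp only [blowUp]
    split_ifs <;> simp [h0]
  rcases lt_trichotomy p j with h | h | h
  · refine Or.inr ⟨p, fun l hl => ?_, ?_⟩
    · have : l ≠ j := ne_of_lt (lt_trans hl h)
      simp only [blowUp, if_neg this]; exact hp0 l hl
    · have : p ≠ j := ne_of_lt h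
      simp only [blowUp, if_neg this]; exact hpp
  · subst h
    refine Or.inr ⟨p, fun l hl => ?_, ?_⟩
    · simp only [blowUp, if_neg (ne_of_lt hl)]; exact hp0 l hl
    · simpa [blowUp, hp0 i hij] using hpp
  · refine Or.inr ⟨p, fun l hl => ?_, ?_⟩
    · simp only [blowUp]
      split_ifs with he
      · rw [hp0 i (lt_trans hij h), hp0 j h]; ring
      · exact hp0 l hl
    · simp only [blowUp, if_neg (ne_of_gt h)]; exact hpp

lemma lexNN_blowDown (i j : Fin n) (hij : i < j) {v : Fin n → ℚ} (hv : LexNN v) :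
    LexNN (blowDown n i j v) := by
  rcases hv with h0 | ⟨p, hp0, hpp⟩
  · refine Or.inl fun l => ?_
    simp only [blowDown]
    split_ifs <;> simp [h0]
  rcases lt_trichotomy p j with h | h | h
  · refine Or.inr ⟨p, fun l hl => ?_, ?_⟩
    · have : l ≠ j := ne_of_lt (lt_trans hl h)
      simp only [blowDown, if_neg this]; exact hp0 l hl
    · have : p ≠ j := ne_of_lt h
      simp only [blowDown, if_neg this]; exact hpp
  · subst h
    refine Or.inr ⟨p, fun l hl => ?_, ?_⟩
    · simp only [blowDown, if_neg (ne_of_lt hl)]; exact hp0 l hl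
    · simpa [blowDown, hp0 i hij] using hpp
  · refine Or.inr ⟨p, fun l hl => ?_, ?_⟩
    · simp only [blowDown]
      split_ifs with he
      · rw [hp0 l hl, hp0 i (lt_trans hij h)]; ring
      · exact hp0 l hl
    · simp only [blowDown, if_neg (ne_of_gt h)]; exact hpp

lemma lexNN_foldr_up (L : List ((Fin n → ℚ) → (Fin n → ℚ)))
    (hL : ∀ g ∈ L, ∃ i j : Fin n, i < j ∧ g = blowUp n i j)
    {v : Fin n → ℚ} (hv : LexNN v) : LexNN (L.foldr (· ∘ ·) id v) := by
  induction L with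
  | nil => exact hv
  | cons g t ih =>
    obtain ⟨i, j, hij, rfl⟩ := hL g List.mem_cons_self
    exact lexNN_blowUp i j hij (ih fun x hx => hL x (List.mem_cons_of_mem _ hx))

lemma isBlowUpComp_lexNN {Φ : (Fin n → ℚ) → (Fin n → ℚ)} (h : IsBlowUpComp n Φ)
    {v : Fin n → ℚ} (hv : LexNN v) : LexNN (Φ v) := by
  obtain ⟨L, hL, rfl⟩ := h; exact lexNN_foldr_up L hL hv

lemma lexNN_foldr_down (L : List ((Fin n → ℚ) → (Fin n → ℚ)))
    (hL : ∀ g ∈ L, ∃ i j : Fin n, i < j ∧ g = blowDown n i j)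
    {v : Fin n → ℚ} (hv : LexNN v) : LexNN (L.foldr (· ∘ ·) id v) := by
  induction L with
  | nil => exact hv
  | cons g t ih =>
    obtain ⟨i, j, hij, rfl⟩ := hL g List.mem_cons_self
    exact lexNN_blowDown i j hij (ih fun x hx => hL x (List.mem_cons_of_mem _ hx))

lemma isBlowDownComp_lexNN {Φ : (Fin n → ℚ) → (Fin n → ℚ)} (h : IsBlowDownComp n Φ)
    {v : Fin n → ℚ} (hv : LexNN v) : LexNN (Φ v) := by
  obtain ⟨L, hL, rfl⟩ := h; exact lexNN_foldr_down L hL hv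

lemma blowUp_iterate (i j : Fin n) (hij : i ≠ j) (m : ℕ) (a : Fin n → ℚ) :
    (blowUp n i j)^[m] a = fun l => if l = j then a j + m * a i else a l := by
  induction m with
  | zero => funext l; by_cases h : l = j <;> simp [h]
  | succ m ih =>
    rw [Function.iterate_succ_apply', ih]
    funext l
    by_cases h : l = j
    · simp only [blowUp, h, if_pos, if_true, if_neg hij]
      push_cast; ring
    · simp [blowUp, h]

end PieceAux


namespace PieceAux

variable {n : ℕ}

lemma exists_blowUpComp_nonneg :
    ∀ (N : ℕ) (v : Fin n → ℚ), LexNN v →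
      (Finset.univ.filter (fun l => v l < 0)).card ≤ N →
      ∃ Φ, IsBlowUpComp n Φ ∧ ∀ l, 0 ≤ Φ v l := by
  intro N
  induction N with
  | zero =>
    intro v _ hc
    refine ⟨id, isBlowUpComp_id, fun l => ?_⟩
    by_contra h0
    have hl : l ∈ Finset.univ.filter (fun l => v l < 0) :=
      Finset.mem_filter.mpr ⟨Finset.mem_univ l, lt_of_not_ge h0⟩
    have := Finset.card_eq_zero.mp (Nat.le_zero.mp hc)
    simp [this] at hl
  | succ N ih =>
    intro v hv hc
    by_cases hneg : ∀ l, 0 ≤ v l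
    · exact ⟨id, isBlowUpComp_id, hneg⟩
    push_neg at hneg
    obtain ⟨j, hj⟩ := hneg
    have hj' : v j < 0 := hj
    rcases hv with h0 | ⟨i, hi0, hip⟩
    · exact absurd (h0 j) (by linarith)
    have hij : i < j := by
      rcases lt_trichotomy i j with h | h | h
      · exact h
      · subst h; linarith
      · exact absurd (hi0 j h) (by linarith)
    obtain ⟨m, hm⟩ := Archimedean.arch (-(v j)) hip
    rw [nsmul_eq_mul] at hm
    set w := (blowUp n i j)^[m] v with hwdef
    have hwform : w = fun l => if l = j then v j + m * v i else v l :=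
      blowUp_iterate i j hij.ne m v
    have hwj : 0 ≤ w j := by rw [hwform]; simp; linarith
    have hwother : ∀ l, l ≠ j → w l = v l := by
      intro l hl; rw [hwform]; simp [hl]
    have hwlex : LexNN w := by
      refine Or.inr ⟨i, fun l hl => ?_, ?_⟩
      · rw [hwother l (ne_of_lt (lt_trans hl hij))]; exact hi0 l hl
      · rw [hwother i hij.ne]; exact hip
    have hsub : (Finset.univ.filter (fun l => w l < 0)) ⊆
        (Finset.univ.filter (fun l => v l < 0)).erase j := by
      intro l hl
      have hlw : w l < 0 := (Finset.mem_filter.mp hl).2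
      have hlj : l ≠ j := by rintro rfl; exact absurd hwj (not_le.mpr hlw)
      refine Finset.mem_erase.mpr ⟨hlj, Finset.mem_filter.mpr ⟨Finset.mem_univ l, ?_⟩⟩
      rwa [hwother l hlj] at hlw
    have hjmem : j ∈ Finset.univ.filter (fun l => v l < 0) :=
      Finset.mem_filter.mpr ⟨Finset.mem_univ j, hj'⟩
    have hcard : (Finset.univ.filter (fun l => w l < 0)).card ≤ N := by
      calc (Finset.univ.filter (fun l => w l < 0)).card
          ≤ ((Finset.univ.filter (fun l => v l < 0)).erase j).card :=
            Finset.card_le_card hsub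
        _ = (Finset.univ.filter (fun l => v l < 0)).card - 1 :=
            Finset.card_erase_of_mem hjmem
        _ ≤ N := by omega
    obtain ⟨Φ', hΦ', hpos⟩ := ih w hwlex hcard
    obtain ⟨L', hL', rfl⟩ := hΦ'
    refine ⟨(L' ++ List.replicate m (blowUp n i j)).foldr (· ∘ ·) id,
      ⟨_, ?_, rfl⟩, ?_⟩
    · intro g hg
      rcases List.mem_append.mp hg with h | h
      · exact hL' g h
      · exact ⟨i, j, hij, List.eq_of_mem_replicate h⟩
    · intro l
      rw [foldr_comp_append, foldr_replicate]
      exact hpos l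

lemma exists_blowUpComp_nonneg_list :
    ∀ V : List (Fin n → ℚ), (∀ v ∈ V, LexNN v) →
      ∃ Φ, IsBlowUpComp n Φ ∧ ∀ v ∈ V, ∀ l, 0 ≤ Φ v l := by
  intro V
  induction V with
  | nil => exact fun _ => ⟨id, isBlowUpComp_id, by simp⟩
  | cons v t ih =>
    intro hV
    obtain ⟨Φt, hΦt, hpost⟩ := ih fun x hx => hV x (List.mem_cons_of_mem _ hx)
    have hlex : LexNN (Φt v) := isBlowUpComp_lexNN hΦt (hV v List.mem_cons_self)
    obtain ⟨Φv, hΦv, hposv⟩ := exists_blowUpComp_nonneg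
      (Finset.univ.filter (fun l => Φt v l < 0)).card (Φt v) hlex le_rfl
    refine ⟨Φv ∘ Φt, isBlowUpComp_comp hΦv hΦt, ?_⟩
    intro u hu
    rcases List.mem_cons.mp hu with rfl | hu
    · exact hposv
    · exact isBlowUpComp_nonneg hΦv (Φt u) (hpost u hu)

lemma blowDownComp_lattice {Φ : (Fin n → ℚ) → (Fin n → ℚ)} (h : IsBlowDownComp n Φ)
    (d : ℕ) (a : Fin n → ℚ) (ha : ∀ l, ∃ b : ℤ, a l = (b : ℚ) / d) :
    ∀ l, ∃ b : ℤ, Φ a l = (b : ℚ) / d := by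
  obtain ⟨L, hL, rfl⟩ := h
  induction L with
  | nil => exact ha
  | cons g t ih =>
    obtain ⟨i, j, hij, rfl⟩ := hL g List.mem_cons_self
    have hrec := ih fun x hx => hL x (List.mem_cons_of_mem _ hx)
    intro l
    simp only [List.foldr_cons, Function.comp_apply, blowDown]
    obtain ⟨bi, hbi⟩ := hrec i
    obtain ⟨bl, hbl⟩ := hrec l
    split_ifs
    · exact ⟨bl - bi, by rw [hbl, hbi]; push_cast; ring⟩
    · exact ⟨bl, hbl⟩

lemma blowDownComp_apply_zero (hn : 0 < n) {Φ : (Fin n → ℚ) → (Fin n → ℚ)}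
    (h : IsBlowDownComp n Φ) (a : Fin n → ℚ) : Φ a ⟨0, hn⟩ = a ⟨0, hn⟩ := by
  obtain ⟨L, hL, rfl⟩ := h
  induction L with
  | nil => rfl
  | cons g t ih =>
    obtain ⟨i, j, hij, rfl⟩ := hL g List.mem_cons_self
    have hrec := ih fun x hx => hL x (List.mem_cons_of_mem _ hx)
    simp only [List.foldr_cons, Function.comp_apply, blowDown]
    have : (⟨0, hn⟩ : Fin n) ≠ j := by
      intro he
      have : (0 : ℕ) = (j : ℕ) := congrArg Fin.val he
      have hij' : (i : ℕ) < (j : ℕ) := hij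
      omega
    rw [if_neg this, hrec]

end PieceAux


namespace PieceAux

lemma piece_mono (k : Type*) [Field k] (n : ℕ)
    (Φ₁ Φ₂ : (Fin n → ℚ) → (Fin n → ℚ)) (d₁ d₂ : ℕ) (hd₂ : 0 < d₂)
    (hΓ : Φ₁ '' {u : Fin n → ℚ | ∀ l, 0 ≤ u l} ⊆ Φ₂ '' {u : Fin n → ℚ | ∀ l, 0 ≤ u l})
    (hdd : d₁ ∣ d₂) : piece k n Φ₁ d₁ ⊆ piece k n Φ₂ d₂ := by
  obtain ⟨c, rfl⟩ := hdd
  have hc : (c : ℚ) ≠ 0 := by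
    have : c ≠ 0 := by rintro rfl; simp at hd₂
    exact_mod_cast this
  have hd1 : (d₁ : ℚ) ≠ 0 := by
    have : d₁ ≠ 0 := by rintro rfl; simp at hd₂
    exact_mod_cast this
  intro f hf v hv
  obtain ⟨hmem, hco⟩ := hf v hv
  refine ⟨hΓ hmem, fun l => ?_⟩
  obtain ⟨a, ha⟩ := hco l
  refine ⟨a * c, ?_⟩
  rw [ha]
  push_cast
  field_simp

/-- common refinement cone containment -/
lemma image_cone_subset {n : ℕ} {Φ M Ψ : (Fin n → ℚ) → (Fin n → ℚ)}
    (hΦ : IsBlowDownComp n Φ) (hM : IsBlowUpComp n M)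
    (hgen : ∀ l : Fin n, ∀ l', 0 ≤ M (Φ (Pi.single l 1)) l')
    (hinv : ∀ a, Ψ (M a) = a) :
    Φ '' {u : Fin n → ℚ | ∀ l, 0 ≤ u l} ⊆ Ψ '' {u : Fin n → ℚ | ∀ l, 0 ≤ u l} := by
  obtain ⟨T, hT⟩ := isBlowDownComp_linear hΦ
  obtain ⟨S, hS⟩ := isBlowUpComp_linear hM
  rintro x ⟨u, hu, rfl⟩
  refine ⟨M (Φ u), fun l' => ?_, hinv (Φ u)⟩
  have husum : u = ∑ l, u l • (Pi.single l 1 : Fin n → ℚ) := by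
    nth_rewrite 1 [← Finset.univ_sum_single u]
    refine Finset.sum_congr rfl fun l _ => ?_
    funext l'
    simp only [Pi.single_apply, Pi.smul_apply, smul_eq_mul]
    split_ifs <;> simp
  have hdecomp : M (Φ u) = ∑ l, u l • M (Φ (Pi.single l 1)) := by
    rw [hT, hS]
    calc S (T u) = S (T (∑ l, u l • (Pi.single l 1 : Fin n → ℚ))) := by rw [← husum]
      _ = ∑ l, u l • S (T ((Pi.single l 1 : Fin n → ℚ))) := by
          simp only [map_sum, map_smul]
  rw [hdecomp, Finset.sum_apply]
  refine Finset.sum_nonneg fun l _ => ?_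
  rw [Pi.smul_apply, smul_eq_mul]
  exact mul_nonneg (hu l) (hgen l l')

end PieceAux


open PieceAux

/-- **(Lemma on the direct system of the rings `k[[Γ,d]]`).**  For `Γ = Φ₁(ℚ_{≥0}^n)`,
`Γ' = Φ₂(ℚ_{≥0}^n)` in `Λ` and positive integers `d, d'`, one has
`k[[Γ,d]] ⊆ k[[Γ',d']]` if and only if `Γ ⊆ Γ'` and `d ∣ d'`; consequently (the family
being directed) there are `Γ'' ∈ Λ` and `d'' > 0` with `k[[Γ,d]] ⊆ k[[Γ'',d'']]` and
`k[[Γ',d']] ⊆ k[[Γ'',d'']]`, so the rings `k[[Γ,d]]` with the inclusions form a direct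
system of `k`-algebras. -/
theorem piece_subset_piece_iff
    (k : Type*) [Field k] [IsAlgClosed k] [CharZero k]
    (n : ℕ) (hn : 1 < n)
    (Φ₁ Φ₂ : (Fin n → ℚ) → (Fin n → ℚ))
    (h₁ : IsBlowDownComp n Φ₁) (h₂ : IsBlowDownComp n Φ₂)
    (d₁ d₂ : ℕ) (hd₁ : 0 < d₁) (hd₂ : 0 < d₂) :
    (piece k n Φ₁ d₁ ⊆ piece k n Φ₂ d₂ ↔
      (Φ₁ '' {u : Fin n → ℚ | ∀ l, 0 ≤ u l} ⊆ Φ₂ '' {u : Fin n → ℚ | ∀ l, 0 ≤ u l} ∧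
        d₁ ∣ d₂)) ∧
    (∃ Φ₃ : (Fin n → ℚ) → (Fin n → ℚ), ∃ d₃ : ℕ, IsBlowDownComp n Φ₃ ∧ 0 < d₃ ∧
      piece k n Φ₁ d₁ ⊆ piece k n Φ₃ d₃ ∧ piece k n Φ₂ d₂ ⊆ piece k n Φ₃ d₃) := by
  have hn0 : 0 < n := by omega
  constructor
  · constructor
    · -- forward direction
      intro h
      obtain ⟨T₁, hT₁⟩ := isBlowDownComp_linear h₁
      obtain ⟨T₂, hT₂⟩ := isBlowDownComp_linear h₂
      constructor
      · -- Γ₁ ⊆ Γ₂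
        rintro x ⟨u, hu, rfl⟩
        set q : Fin n → ℚ := Φ₁ u with hq
        set D : ℕ := ∏ l, (q l).den with hD
        have hDpos : 0 < D := Finset.prod_pos fun l _ => (q l).pos
        set N : ℕ := d₁ * D with hN
        have hNpos : 0 < N := Nat.mul_pos hd₁ hDpos
        have hNQ : (N : ℚ) ≠ 0 := Nat.cast_ne_zero.mpr hNpos.ne'
        have hd1Q : (d₁ : ℚ) ≠ 0 := Nat.cast_ne_zero.mpr hd₁.ne'
        have hcoord : ∀ l, ∃ a : ℤ, ((N : ℚ) • q) l = (a : ℚ) / (d₁ : ℚ) := by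
          intro l
          obtain ⟨c, hc⟩ := Finset.dvd_prod_of_mem (fun l => (q l).den) (Finset.mem_univ l)
          refine ⟨(d₁ : ℤ) * d₁ * c * (q l).num, ?_⟩
          have hden : ((q l).den : ℚ) ≠ 0 := Nat.cast_ne_zero.mpr (q l).pos.ne'
          have hql : (((q l).den : ℚ)) * q l = ((q l).num : ℚ) := Rat.den_mul_eq_num (q l)
          have hDq : (D : ℚ) * q l = (c : ℚ) * ((q l).num : ℚ) := by
            rw [hD, hc]
            push_cast
            linear_combination (c : ℚ) * hql
          have hNq : (N : ℚ) = (d₁ : ℚ) * (D : ℚ) := by rw [hN]; push_cast; ring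
          rw [Pi.smul_apply, smul_eq_mul, hNq, eq_div_iff hd1Q]
          push_cast
          linear_combination (d₁ : ℚ) * (d₁ : ℚ) * hDq
        have hsingle : HahnSeries.single (toLex ((N : ℚ) • q)) (1 : k) ∈ piece k n Φ₁ d₁ := by
          intro x hx
          have hx' : x = toLex ((N : ℚ) • q) := HahnSeries.support_single_subset hx
          subst hx'
          refine ⟨⟨(N : ℚ) • u, fun l => ?_, ?_⟩, hcoord⟩
          · exact mul_nonneg (by positivity) (hu l)
          · show Φ₁ ((N : ℚ) • u) = (N : ℚ) • q
            rw [hq, hT₁, map_smul]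
        have hsupp : toLex ((N : ℚ) • q) ∈
            (HahnSeries.single (toLex ((N : ℚ) • q)) (1 : k)).support := by
          rw [HahnSeries.mem_support, HahnSeries.coeff_single_same]
          exact one_ne_zero
        obtain ⟨⟨w, hw, hweq⟩, -⟩ := h hsingle _ hsupp
        have hweq' : Φ₂ w = (N : ℚ) • q := hweq
        refine ⟨(N : ℚ)⁻¹ • w, fun l => ?_, ?_⟩
        · exact mul_nonneg (by positivity) (hw l)
        · rw [hT₂, map_smul, ← hT₂, hweq', smul_smul, inv_mul_cancel₀ hNQ, one_smul]
      · -- d₁ ∣ d₂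
        set z : Fin n := ⟨0, hn0⟩ with hz
        set u : Fin n → ℚ := fun _ => 1 / (d₁ : ℚ) with hu
        have hulat : ∀ l, ∃ b : ℤ, u l = (b : ℚ) / (d₁ : ℚ) := fun l => ⟨1, by simp [hu]⟩
        have hv := blowDownComp_lattice h₁ d₁ u hulat
        have hd1Q : (d₁ : ℚ) ≠ 0 := Nat.cast_ne_zero.mpr hd₁.ne'
        have hd2Q : (d₂ : ℚ) ≠ 0 := Nat.cast_ne_zero.mpr hd₂.ne'
        have hsingle : HahnSeries.single (toLex (Φ₁ u)) (1 : k) ∈ piece k n Φ₁ d₁ := by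
          intro x hx
          have hx' : x = toLex (Φ₁ u) := HahnSeries.support_single_subset hx
          subst hx'
          exact ⟨⟨u, fun l => by rw [hu]; positivity, rfl⟩, hv⟩
        have hsupp : toLex (Φ₁ u) ∈ (HahnSeries.single (toLex (Φ₁ u)) (1 : k)).support := by
          rw [HahnSeries.mem_support, HahnSeries.coeff_single_same]
          exact one_ne_zero
        obtain ⟨-, hco⟩ := h hsingle _ hsupp
        obtain ⟨a, ha⟩ := hco z
        have hvz : Φ₁ u z = 1 / (d₁ : ℚ) := blowDownComp_apply_zero hn0 h₁ u
        have ha' : (1 : ℚ) / (d₁ : ℚ) = (a : ℚ) / (d₂ : ℚ) := by rw [← hvz]; exact ha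
        have key : (d₂ : ℚ) = (a : ℚ) * (d₁ : ℚ) := by
          field_simp at ha'
          linarith
        have keyZ : (d₂ : ℤ) = a * (d₁ : ℤ) := by exact_mod_cast key
        have : (d₁ : ℤ) ∣ (d₂ : ℤ) := ⟨a, by linarith⟩
        exact Int.natCast_dvd_natCast.mp this
    · -- backward direction
      rintro ⟨hΓ, hdd⟩
      exact piece_mono k n Φ₁ Φ₂ d₁ d₂ hd₂ hΓ hdd
  · -- directedness
    set V : List (Fin n → ℚ) :=
      (List.finRange n).map (fun l => Φ₁ (Pi.single l 1)) ++
        (List.finRange n).map (fun l => Φ₂ (Pi.single l 1)) with hV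
    have hVlex : ∀ v ∈ V, LexNN v := by
      intro v hv
      rcases List.mem_append.mp hv with h | h <;>
        obtain ⟨l, -, rfl⟩ := List.mem_map.mp h
      · exact isBlowDownComp_lexNN h₁ (lexNN_of_nonneg fun l' => by
          simp only [Pi.single_apply]; split_ifs <;> norm_num)
      · exact isBlowDownComp_lexNN h₂ (lexNN_of_nonneg fun l' => by
          simp only [Pi.single_apply]; split_ifs <;> norm_num)
    obtain ⟨M, hM, hMpos⟩ := exists_blowUpComp_nonneg_list V hVlex
    obtain ⟨Ψ, hΨ, hinv⟩ := isBlowUpComp_exists_leftInv hM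
    have hmem1 : ∀ l : Fin n, Φ₁ (Pi.single l 1) ∈ V := fun l =>
      List.mem_append.mpr (Or.inl (List.mem_map.mpr ⟨l, List.mem_finRange l, rfl⟩))
    have hmem2 : ∀ l : Fin n, Φ₂ (Pi.single l 1) ∈ V := fun l =>
      List.mem_append.mpr (Or.inr (List.mem_map.mpr ⟨l, List.mem_finRange l, rfl⟩))
    refine ⟨Ψ, d₁ * d₂, hΨ, Nat.mul_pos hd₁ hd₂, ?_, ?_⟩
    · exact piece_mono k n Φ₁ Ψ d₁ (d₁ * d₂) (Nat.mul_pos hd₁ hd₂)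
        (image_cone_subset h₁ hM (fun l l' => hMpos _ (hmem1 l) l') hinv)
        (Dvd.intro d₂ rfl)
    · exact piece_mono k n Φ₂ Ψ d₂ (d₁ * d₂) (Nat.mul_pos hd₁ hd₂)
        (image_cone_subset h₂ hM (fun l l' => hMpos _ (hmem2 l) l') hinv)
        (Dvd.intro_left d₁ rfl)
end
end
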